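/- For every integer m ≥ 1, the function V(x) = g'(x)·x^(2m-1) - (g(x))^(2m-1) is even and real-analytic on a neighborhood of I, so there is a real-analytic function v on a neighborhood of J with v(g(x)) = V(x) for all x ∈ I; this v satisfies -α·v(-x/α) - α·g'(y₁(x))·v(y₁(x)) = α^(-(2m-2))·v(x) for all x ∈ J. Hence α^(-(2m-2)) is an eigenvalue of the induced operator on analytic vector fields for every m ≥ 1 (for m = 1 one obtains the eigenvalue 1). -/

import Mathlib

open Set Filter Topology FormalMultilinearSeries
open scoped ENNReal NNReal

lemma analyticAt_deriv' {f : ℝ → ℝ} {x : ℝ} (h : AnalyticAt ℝ f x) :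
    AnalyticAt ℝ (deriv f) x := by
  have h2 : AnalyticOnNhd ℝ f {y | AnalyticAt ℝ f y} := fun y hy => hy
  exact h2.deriv x h


lemma ev_zero_of_eqOn_Icc {F : ℝ → ℝ} {a b : ℝ} (hab : a < b)
    (hF : ∀ x ∈ Icc a b, AnalyticAt ℝ F x)
    (h0 : ∀ x ∈ Icc a b, F x = 0) : ∀ x ∈ Icc a b, ∀ᶠ z in 𝓝 x, F z = 0 := by
  intro x hx
  rcases lt_or_eq_of_le hx.1 with hxa | hxa
  · rcases lt_or_eq_of_le hx.2 with hxb | hxb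
    · filter_upwards [Icc_mem_nhds hxa hxb] with z hz using h0 z hz
    · -- x = b
      rcases (hF x hx).eventually_eq_zero_or_eventually_ne_zero with h | h
      · exact h
      · exfalso
        have h1 : ∀ᶠ z in 𝓝[<] x, F z = 0 := by
          filter_upwards [Ioo_mem_nhdsLT_of_mem ⟨hxa, le_refl x⟩] with z hz
          exact h0 z ⟨hz.1.le, hxb ▸ hz.2.le⟩
        have h2 : ∀ᶠ z in 𝓝[<] x, F z ≠ 0 :=
          nhdsWithin_mono x (fun z hz => ne_of_lt hz) h
        obtain ⟨z, hz1, hz2⟩ := (h1.and h2).exists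
        exact hz2 hz1
  · -- x = a
    rcases (hF x hx).eventually_eq_zero_or_eventually_ne_zero with h | h
    · exact h
    · exfalso
      have hxb : x < b := hxa ▸ hab
      have h1 : ∀ᶠ z in 𝓝[>] x, F z = 0 := by
        filter_upwards [Ioo_mem_nhdsGT_of_mem ⟨le_refl x, hxb⟩] with z hz
        exact h0 z ⟨hx.1.trans hz.1.le, hz.2.le⟩
      have h2 : ∀ᶠ z in 𝓝[>] x, F z ≠ 0 :=
        nhdsWithin_mono x (fun z hz => ne_of_gt hz) h
      obtain ⟨z, hz1, hz2⟩ := (h1.and h2).exists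
      exact hz2 hz1

lemma analytic_local_inverse {f : ℝ → ℝ} {a : ℝ} (hf : AnalyticAt ℝ f a)
    (h' : deriv f a ≠ 0) :
    ∃ φ : ℝ → ℝ, AnalyticAt ℝ φ (f a) ∧ (∀ᶠ x in 𝓝 a, φ (f x) = x) ∧
      (∀ᶠ y in 𝓝 (f a), f (φ y) = y) := by
  have hd : HasStrictDerivAt f (deriv f a) a :=
    (hf.contDiffAt (n := 1)).hasStrictDerivAt one_ne_zero
  have hF := hd.hasStrictFDerivAt_equiv h'
  set PH := hF.toOpenPartialHomeomorph f with hPH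
  have hsrc : a ∈ PH.source := hF.mem_toOpenPartialHomeomorph_source
  have hcoe : ⇑PH = f := hF.toOpenPartialHomeomorph_coe
  have hfa : PH a = f a := by rw [hcoe]
  have htgt : f a ∈ PH.target := by
    rw [← hfa]; exact PH.map_source hsrc
  have hfd : fderiv ℝ f a = ((ContinuousLinearEquiv.unitsEquivAut ℝ (Units.mk0 _ h')) :
      ℝ →L[ℝ] ℝ) := hF.hasFDerivAt.fderiv
  have hsymm : AnalyticAt ℝ PH.symm (f a) := by
    refine PH.analyticAt_symm (i := (ContinuousLinearEquiv.unitsEquivAut ℝ (Units.mk0 _ h'))) htgt ?_ ?_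
    · have : PH.symm (f a) = a := by rw [← hfa, PH.left_inv hsrc]
      rw [this, hcoe]; exact hf
    · have : PH.symm (f a) = a := by rw [← hfa, PH.left_inv hsrc]
      rw [this, hcoe]; exact hfd
  refine ⟨PH.symm, hsymm, ?_, ?_⟩
  · filter_upwards [PH.open_source.mem_nhds hsrc] with x hx
    have := PH.left_inv hx
    rwa [hcoe] at this
  · filter_upwards [PH.open_target.mem_nhds htgt] with y hy
    have := PH.right_inv hy
    rwa [hcoe] at this

lemma even_descent {F : ℝ → ℝ} (hF : AnalyticAt ℝ F 0) (hev : ∀ x : ℝ, F (-x) = F x) :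
    ∃ Φ : ℝ → ℝ, AnalyticAt ℝ Φ 0 ∧ ∀ᶠ x in 𝓝 (0:ℝ), F x = Φ (x ^ 2) := by
  obtain ⟨p, hp⟩ := hF
  have hsum : ∀ᶠ z in 𝓝 (0:ℝ), HasSum (fun n => z ^ n • p.coeff n) (F z) := by
    have := hasFPowerSeriesAt_iff.mp hp
    simpa using this
  obtain ⟨r, hr0, hrrad⟩ := ENNReal.lt_iff_exists_nnreal_btwn.mp hp.radius_pos
  have hr0' : 0 < r := by exact_mod_cast hr0
  obtain ⟨C, hC, hbound⟩ := p.norm_mul_pow_le_of_lt_radius hrrad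
  set q : FormalMultilinearSeries ℝ ℝ ℝ := ofScalars ℝ (fun k => p.coeff (2 * k)) with hq
  have hqrad : (↑(r ^ 2) : ℝ≥0∞) ≤ q.radius := by
    apply q.le_radius_of_bound C
    intro k
    have h1 : ‖q k‖ = ‖p.coeff (2 * k)‖ := ofScalars_norm ℝ (fun k => p.coeff (2 * k)) k
    have h2 : ‖p.coeff (2 * k)‖ = ‖p (2 * k)‖ := (p.norm_apply_eq_norm_coef).symm
    calc ‖q k‖ * (↑(r ^ 2)) ^ k = ‖p (2 * k)‖ * (↑r : ℝ) ^ (2 * k) := by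
          rw [h1, h2]; push_cast; ring
      _ ≤ C := hbound (2 * k)
  have hqpos : 0 < q.radius := lt_of_lt_of_le (by positivity) hqrad
  have hqball := q.hasFPowerSeriesOnBall hqpos
  refine ⟨q.sum, hqball.hasFPowerSeriesAt.analyticAt, ?_⟩
  have hsumneg : ∀ᶠ z in 𝓝 (0:ℝ), HasSum (fun n => (-z) ^ n • p.coeff n) (F z) := by
    have hcont : Tendsto (fun z : ℝ => -z) (𝓝 0) (𝓝 0) := by
      simpa using (continuous_neg (G := ℝ)).tendsto 0
    filter_upwards [hcont.eventually hsum] with z hz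
    rwa [hev] at hz
  have hx2 : ∀ᶠ x in 𝓝 (0:ℝ), (x ^ 2 : ℝ) ∈ EMetric.ball (0 : ℝ) q.radius := by
    have hc : Tendsto (fun x : ℝ => x ^ 2) (𝓝 0) (𝓝 0) := by
      simpa using ((continuous_pow 2).tendsto (0:ℝ))
    exact hc.eventually (EMetric.ball_mem_nhds (0:ℝ) hqpos)
  filter_upwards [hsum, hsumneg, hx2] with x h1 h2 h3
  have hadd : HasSum (fun n => (x ^ n • p.coeff n + (-x) ^ n • p.coeff n) / 2) (F x) := by
    have := (h1.add h2).div_const 2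
    simpa using this
  have hinj : Function.Injective (fun k : ℕ => 2 * k) := fun a b hab =>
    Nat.eq_of_mul_eq_mul_left two_pos hab
  have hvanish : ∀ n ∉ Set.range (fun k : ℕ => 2 * k),
      (x ^ n • p.coeff n + (-x) ^ n • p.coeff n) / 2 = 0 := by
    intro n hn
    have hodd : Odd n := by
      rcases Nat.even_or_odd n with he | ho
      · obtain ⟨t, rfl⟩ := he
        exact absurd ⟨t, show 2 * t = t + t by omega⟩ hn
      · exact ho
    rw [hodd.neg_pow]
    simp only [smul_eq_mul]
    ring
  have heven : HasSum (fun k => (x ^ 2) ^ k • p.coeff (2 * k)) (F x) := by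
    refine ((hinj.hasSum_iff hvanish).mpr hadd).congr_fun fun k => ?_
    have he : ((-x) ^ (2 * k) : ℝ) = x ^ (2 * k) := (even_two_mul k).neg_pow x
    simp only [Function.comp_apply, he, ← pow_mul]
    ring
  have hqsum : HasSum (fun k => (x ^ 2) ^ k • p.coeff (2 * k)) (q.sum (x ^ 2)) := by
    have := hqball.hasSum (y := x ^ 2) h3
    simp only [zero_add] at this
    refine this.congr_fun fun k => ?_
    rw [hq, ofScalars_apply_eq]
    simp [smul_eq_mul]
    ring
  exact heven.unique hqsum

lemma deriv_descent {F Φ : ℝ → ℝ} (hΦ : AnalyticAt ℝ Φ 0)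
    (hFΦ : ∀ᶠ x in 𝓝 (0:ℝ), F x = Φ (x ^ 2)) :
    iteratedDeriv 2 F 0 = 2 * deriv Φ 0 := by
  have hΦnb : ∀ᶠ y in 𝓝 (0:ℝ), AnalyticAt ℝ Φ y := hΦ.eventually_analyticAt
  have hsq : Tendsto (fun x : ℝ => x ^ 2) (𝓝 0) (𝓝 0) := by
    simpa using (continuous_pow 2).tendsto (0:ℝ)
  have hdF : deriv F =ᶠ[𝓝 (0:ℝ)] fun x => deriv Φ (x ^ 2) * (2 * x) := by
    filter_upwards [hFΦ.eventually_nhds, hsq.eventually hΦnb] with x hx hax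
    have h2 : HasDerivAt (fun z : ℝ => z ^ 2) (2 * x) x := by
      simpa using hasDerivAt_pow 2 x
    have houter : HasDerivAt Φ (deriv Φ (x ^ 2)) ((fun z : ℝ => z ^ 2) x) := by
      simpa using hax.differentiableAt.hasDerivAt
    have hdiff : HasDerivAt (fun z : ℝ => Φ (z ^ 2)) (deriv Φ (x ^ 2) * (2 * x)) x := by
      simpa [Function.comp_def] using HasDerivAt.comp (h := fun z : ℝ => z ^ 2) x houter h2
    have hxx : F =ᶠ[𝓝 x] fun z => Φ (z ^ 2) := hx
    rw [hxx.deriv_eq, hdiff.deriv]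
  have h2it : iteratedDeriv 2 F 0 = deriv (deriv F) 0 := by
    simp [iteratedDeriv_succ, iteratedDeriv_zero]
  rw [h2it, hdF.deriv_eq]
  have hu : HasDerivAt (fun x : ℝ => deriv Φ (x ^ 2)) (deriv (deriv Φ) 0 * (2 * 0)) 0 := by
    have hd : HasDerivAt (fun z : ℝ => z ^ 2) (2 * 0) 0 := by
      simpa using hasDerivAt_pow 2 (0:ℝ)
    have houter : HasDerivAt (deriv Φ) (deriv (deriv Φ) 0) ((fun z : ℝ => z ^ 2) 0) := by
      have := analyticAt_deriv' hΦ
      simpa using this.differentiableAt.hasDerivAt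
    have := HasDerivAt.comp (h := fun z : ℝ => z ^ 2) 0 houter hd
    simpa [Function.comp_def] using this
  have hv : HasDerivAt (fun x : ℝ => 2 * x) 2 0 := by
    simpa using (hasDerivAt_id (0:ℝ)).const_mul (2:ℝ)
  have hprod := hu.mul hv
  rw [show (fun x : ℝ => deriv Φ (x ^ 2) * (2 * x)) = ((fun x : ℝ => deriv Φ (x ^ 2)) * fun x : ℝ => 2 * x) from rfl, hprod.deriv]
  simp
  ring

set_option maxHeartbeats 1000000 in
theorem stmt12
    (g : ℝ → ℝ) (α : ℝ)
    (hg_an : AnalyticOnNhd ℝ g (Icc (-1) 1))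
    (hg_even : ∀ x : ℝ, g (-x) = g x)
    (hg_anti : StrictAntiOn g (Icc 0 1))
    (hg0 : g 0 = 1)
    (hg'' : iteratedDeriv 2 g 0 < 0)
    (h1 : g 1 < 0) (h2 : 0 < g (g (g 1))) (h3 : g (g (g 1)) < -g 1) (h4 : -g 1 < g (g 1))
    (hα : α = -1 / g 1) (hα1 : 1 < α)
    (hCF : ∀ x ∈ Icc (-1 : ℝ) 1, g x = -α * g (g (-x / α)))
    (J J₀ J₁ : Set ℝ)
    (hJ : J = Icc (g 1) 1) (hJ₀ : J₀ = Icc (g 1) (g (g (g 1)))) (hJ₁ : J₁ = Icc (g (g 1)) 1)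
    (hg'J₁ : ∀ x ∈ J₁, 1 < |deriv g x|)
    (σ : ℝ → ℝ)
    (hσ0 : ∀ x ∈ J₀, σ x = -α * x)
    (hσ1 : ∀ x ∈ J₁, σ x = -α * g x)
    (Λ : Set ℝ)
    (hΛ : Λ = {x : ℝ | ∀ k : ℕ, σ^[k] x ∈ J₀ ∪ J₁})
    (y₁ : ℝ → ℝ)
    (hy₁ : ∀ x ∈ J, y₁ x ∈ J₁ ∧ σ (y₁ x) = x)
    (m : ℕ) (hm : 1 ≤ m) :
    (∀ x : ℝ, deriv g (-x) * (-x) ^ (2 * m - 1) - g (-x) ^ (2 * m - 1)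
        = deriv g x * x ^ (2 * m - 1) - g x ^ (2 * m - 1)) ∧
    AnalyticOnNhd ℝ (fun x : ℝ => deriv g x * x ^ (2 * m - 1) - g x ^ (2 * m - 1))
      (Icc (-1) 1) ∧
    ∃ v : ℝ → ℝ, AnalyticOnNhd ℝ v J ∧
      (∀ x ∈ Icc (-1 : ℝ) 1, v (g x) = deriv g x * x ^ (2 * m - 1) - g x ^ (2 * m - 1)) ∧
      ∀ x ∈ J, -α * v (-x / α) - α * deriv g (y₁ x) * v (y₁ x)
        = α ^ (-(2 * (m : ℤ) - 2)) * v x := by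
  obtain ⟨k, rfl⟩ : ∃ k, m = k + 1 := ⟨m - 1, by omega⟩
  simp only [show 2 * (k + 1) - 1 = 2 * k + 1 from by omega]
  set n : ℕ := 2 * k + 1 with hn
  -- basic numeric facts
  have hα_pos : (0:ℝ) < α := lt_trans one_pos hα1
  have hαne : α ≠ 0 := ne_of_gt hα_pos
  have hg1_ne : g 1 ≠ 0 := ne_of_lt h1
  have hg1_eq : g 1 = -1 / α := by rw [hα]; field_simp
  have hg1_gt : (-1:ℝ) < g 1 := by
    rw [hg1_eq]
    rw [neg_div, neg_lt_neg_iff, div_lt_one hα_pos]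
    exact hα1
  have hg1_inv : 1 / α = -g 1 := by rw [hg1_eq]; field_simp
  -- oddness of deriv g
  have hgfun : (fun x => g (-x)) = g := funext hg_even
  have hderiv_odd : ∀ x : ℝ, deriv g (-x) = -deriv g x := by
    intro x
    have h := deriv_comp_neg (f := g) (x := x)
    rw [hgfun] at h
    linarith
  have hodd_n : Odd n := ⟨k, by omega⟩
  -- Part 1
  have part1 : ∀ x : ℝ, deriv g (-x) * (-x) ^ n - g (-x) ^ n
      = deriv g x * x ^ n - g x ^ n := by
    intro x
    rw [hderiv_odd, hg_even, hodd_n.neg_pow]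
    ring
  -- Part 2
  set V : ℝ → ℝ := fun x => deriv g x * x ^ n - g x ^ n with hVdef
  have hg_deriv_an : AnalyticOnNhd ℝ (deriv g) (Icc (-1:ℝ) 1) := hg_an.deriv
  have part2 : AnalyticOnNhd ℝ V (Icc (-1:ℝ) 1) := fun x hx =>
    ((hg_deriv_an x hx).mul ((analyticAt_id).pow n)).sub ((hg_an x hx).pow n)
  refine ⟨part1, part2, ?_⟩
  -- continuity / monotonicity facts
  have h0mem : (0:ℝ) ∈ Icc (-1:ℝ) 1 := by norm_num
  have h1mem : (1:ℝ) ∈ Icc (-1:ℝ) 1 := by norm_num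
  have hmono : ∀ x ∈ Icc (0:ℝ) 1, ∀ y ∈ Icc (0:ℝ) 1, x ≤ y → g y ≤ g x := by
    intro x hx y hy hxy
    rcases eq_or_lt_of_le hxy with rfl | h
    · exact le_rfl
    · exact (hg_anti hx hy h).le
  have hrange : ∀ x ∈ Icc (-1:ℝ) 1, g x ∈ Icc (g 1) 1 := by
    intro x hx
    rcases le_or_gt 0 x with h0 | h0
    · have hx1 : x ∈ Icc (0:ℝ) 1 := ⟨h0, hx.2⟩
      refine ⟨hmono x hx1 1 ⟨zero_le_one, le_rfl⟩ hx.2, ?_⟩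
      have := hmono 0 ⟨le_rfl, zero_le_one⟩ x hx1 h0
      rwa [hg0] at this
    · have hx1 : -x ∈ Icc (0:ℝ) 1 := ⟨by linarith, by linarith [hx.1]⟩
      rw [← hg_even x]
      refine ⟨hmono (-x) hx1 1 ⟨zero_le_one, le_rfl⟩ hx1.2, ?_⟩
      have := hmono 0 ⟨le_rfl, zero_le_one⟩ (-x) hx1 hx1.1
      rwa [hg0] at this
  have hsubI : Icc (g 1) 1 ⊆ Icc (-1:ℝ) 1 := Icc_subset_Icc (le_of_lt hg1_gt) le_rfl
  have hmemI : ∀ x ∈ Icc (-1:ℝ) 1, -x / α ∈ Icc (-1:ℝ) 1 := by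
    intro x hx
    constructor
    · rw [le_div_iff₀ hα_pos]; nlinarith [hx.2]
    · rw [div_le_iff₀ hα_pos]; nlinarith [hx.1]
  -- analytic continuation of the CF equation
  have hCF_an : ∀ x ∈ Icc (-1:ℝ) 1,
      AnalyticAt ℝ (fun z => g z - -α * g (g (-z / α))) x := by
    intro x hx
    have hi : AnalyticAt ℝ (fun z : ℝ => -z / α) x :=
      ((analyticAt_id).neg).div analyticAt_const hαne
    have hgi : AnalyticAt ℝ (fun z : ℝ => g (-z / α)) x := by
      have h0 : AnalyticAt ℝ g ((fun z : ℝ => -z / α) x) := hg_an _ (hmemI x hx)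
      simpa [Function.comp_def] using AnalyticAt.comp (f := fun z : ℝ => -z / α) h0 hi
    have hggi : AnalyticAt ℝ (fun z : ℝ => g (g (-z / α))) x := by
      have h0 : AnalyticAt ℝ g ((fun z : ℝ => g (-z / α)) x) :=
        hg_an _ (hsubI (hrange _ (hmemI x hx)))
      simpa [Function.comp_def] using AnalyticAt.comp (f := fun z : ℝ => g (-z / α)) h0 hgi
    exact (hg_an x hx).sub (analyticAt_const.mul hggi)
  have hCFev : ∀ x ∈ Icc (-1:ℝ) 1, ∀ᶠ z in 𝓝 x, g z = -α * g (g (-z / α)) := by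
    intro x hx
    have h0 := ev_zero_of_eqOn_Icc (by norm_num : (-1:ℝ) < 1) hCF_an
      (fun z hz => by rw [sub_eq_zero]; exact hCF z hz) x hx
    filter_upwards [h0] with z hz
    rwa [sub_eq_zero] at hz
  -- chain rule from CF
  have hchain : ∀ w ∈ Icc (-1:ℝ) 1,
      deriv g w = deriv g (g (-w / α)) * deriv g (-w / α) := by
    intro w hw
    have hEq : g =ᶠ[𝓝 w] fun z => -α * g (g (-z / α)) := hCFev w hw
    have hdin : HasDerivAt (fun z : ℝ => -z / α) (-1 / α) w := by
      have h0 : HasDerivAt (fun z : ℝ => -z) (-1) w := by simpa using (hasDerivAt_neg' w)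
      simpa [neg_div] using h0.div_const α
    have hg1' : HasDerivAt g (deriv g (-w / α)) ((fun z : ℝ => -z / α) w) := by
      simp only
      exact ((hg_an _ (hmemI w hw)).differentiableAt).hasDerivAt
    have hmid := HasDerivAt.comp (h := fun z : ℝ => -z / α) w hg1' hdin
    have hg2' : HasDerivAt g (deriv g (g (-w / α))) ((g ∘ fun z : ℝ => -z / α) w) := by
      simp only [Function.comp]
      exact ((hg_an _ (hsubI (hrange _ (hmemI w hw)))).differentiableAt).hasDerivAt
    have hout := HasDerivAt.comp (h := g ∘ fun z : ℝ => -z / α) w hg2' hmid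
    have htot := hout.const_mul (-α)
    have htot' : HasDerivAt (fun z => -α * g (g (-z / α)))
        (-α * (deriv g (g (-w / α)) * (deriv g (-w / α) * (-1 / α)))) w := by
      simpa [Function.comp] using htot
    rw [hEq.deriv_eq, htot'.deriv]
    field_simp
  -- injectivity on [0,1]
  have hinj01 : ∀ x1 ∈ Icc (0:ℝ) 1, ∀ x2 ∈ Icc (0:ℝ) 1, g x1 = g x2 → x1 = x2 :=
    fun x1 hx1 x2 hx2 h => hg_anti.injOn hx1 hx2 h
  -- nonvanishing of deriv g on J₁ and on (0,1]
  have hJ1ders : ∀ z ∈ Icc (g (g 1)) 1, deriv g z ≠ 0 := by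
    intro z hz hzero
    have := hg'J₁ z (hJ₁ ▸ hz)
    rw [hzero] at this
    simp at this
    linarith
  have hgg1_pos : 0 < g (g 1) := by linarith
  have hgg1_le1 : g (g 1) ≤ 1 := (hrange (g 1) (hsubI ⟨le_rfl, by linarith⟩)).2
  have hwα_J₁ : ∀ w, 0 ≤ w → w ≤ 1 → g (w / α) ∈ Icc (g (g 1)) 1 := by
    intro w hw0 hw1
    have hwα0 : 0 ≤ w / α := by positivity
    have hwα1 : w / α ≤ -g 1 := by
      rw [← hg1_inv, div_le_div_iff₀ hα_pos hα_pos]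
      nlinarith
    have hng1 : -g 1 ∈ Icc (0:ℝ) 1 := ⟨by linarith, by linarith⟩
    constructor
    · have := hmono (w / α) ⟨hwα0, by linarith⟩ (-g 1) hng1 hwα1
      rwa [hg_even] at this
    · have := hmono 0 ⟨le_rfl, zero_le_one⟩ (w / α) ⟨hwα0, by linarith⟩ hwα0
      rwa [hg0] at this
  have hderiv_ne : ∀ w, 0 < w → w ≤ 1 → deriv g w ≠ 0 := by
    intro w hw0 hw1 hzero
    have hstep : ∀ u : ℝ, 0 < u → u ≤ 1 → deriv g u = 0 → deriv g (u / α) = 0 := by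
      intro u hu0 hu1 hu
      have humem : u ∈ Icc (-1:ℝ) 1 := ⟨by linarith, hu1⟩
      have hc := hchain u humem
      have hJ₁u : g (u / α) ∈ Icc (g (g 1)) 1 := hwα_J₁ u hu0.le hu1
      have hne : deriv g (g (-u / α)) ≠ 0 := by
        rw [show -u / α = -(u / α) by ring, hg_even]
        exact hJ1ders _ hJ₁u
      have hB : deriv g (-u / α) = 0 := by
        have h0 : deriv g (g (-u / α)) * deriv g (-u / α) = 0 := by rw [← hc, hu]
        rcases mul_eq_zero.mp h0 with hA | hB
        · exact absurd hA hne
        · exact hB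
      have hodd2 := hderiv_odd (u / α)
      rw [show -(u / α) = -u / α by ring] at hodd2
      rw [hodd2] at hB
      linarith
    have hseq : ∀ j : ℕ, 0 < w / α ^ j ∧ w / α ^ j ≤ 1 ∧ deriv g (w / α ^ j) = 0 := by
      intro j
      induction j with
      | zero => simpa using ⟨hw0, hw1, hzero⟩
      | succ j ih =>
        obtain ⟨ha, hb, hcz⟩ := ih
        have he : w / α ^ (j + 1) = (w / α ^ j) / α := by
          rw [pow_succ]; ring
        refine ⟨by rw [he]; positivity, ?_, by rw [he]; exact hstep _ ha hb hcz⟩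
        rw [he]
        exact le_trans (div_le_self ha.le hα1.le) hb
    have htends : Tendsto (fun j : ℕ => w / α ^ j) atTop (𝓝 0) := by
      have h1' : Tendsto (fun j : ℕ => (α⁻¹) ^ j) atTop (𝓝 0) :=
        tendsto_pow_atTop_nhds_zero_of_lt_one (by positivity) (by
          rw [inv_lt_one_iff₀]; right; exact hα1)
      have h2' := h1'.const_mul w
      simpa [div_eq_mul_inv, inv_pow] using h2'
    rcases (analyticAt_deriv' (hg_an 0 h0mem)).eventually_eq_zero_or_eventually_ne_zero
      with hcase | hcase
    · have h2it : iteratedDeriv 2 g 0 = deriv (deriv g) 0 := by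
        simp [iteratedDeriv_succ, iteratedDeriv_zero]
      have hconst : deriv g =ᶠ[𝓝 (0:ℝ)] fun _ => (0:ℝ) := hcase
      rw [h2it, hconst.deriv_eq] at hg''
      simp at hg''
    · have htend' : Tendsto (fun j : ℕ => w / α ^ j) atTop (𝓝[≠] (0:ℝ)) := by
        rw [tendsto_nhdsWithin_iff]
        exact ⟨htends, Eventually.of_forall fun j => ne_of_gt (hseq j).1⟩
      obtain ⟨j, hj⟩ := (htend'.eventually hcase).exists
      exact hj (hseq j).2.2
  -- even descents
  have hVeven : ∀ x : ℝ, V (-x) = V x := part1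
  obtain ⟨Φg, hΦg_an, hΦg_eq⟩ := even_descent (hg_an 0 h0mem) hg_even
  obtain ⟨ΦV, hΦV_an, hΦV_eq⟩ := even_descent (part2 0 h0mem) hVeven
  have hΦg0 : Φg 0 = 1 := by
    have := hΦg_eq.self_of_nhds
    simp at this
    rw [← this, hg0]
  have hΦg'ne : deriv Φg 0 ≠ 0 := by
    have hd := deriv_descent hΦg_an hΦg_eq
    intro h
    rw [h] at hd
    rw [hd] at hg''
    simp at hg''
  obtain ⟨ψ, hψ_an, hψ_left, hψ_right⟩ := analytic_local_inverse hΦg_an hΦg'ne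
  have hψ_an1 : AnalyticAt ℝ ψ 1 := hΦg0 ▸ hψ_an
  have hψ0 : ψ 1 = 0 := by
    have := hψ_left.self_of_nhds
    rwa [hΦg0] at this
  set f₁ : ℝ → ℝ := fun y => ΦV (ψ y) with hf₁def
  have hf₁_an : AnalyticAt ℝ f₁ 1 := by
    have h0 : AnalyticAt ℝ ΦV (ψ 1) := hψ0 ▸ hΦV_an
    exact h0.comp hψ_an1
  have hsq : Tendsto (fun x : ℝ => x ^ 2) (𝓝 0) (𝓝 0) := by
    simpa using (continuous_pow 2).tendsto (0:ℝ)
  have hf₁_eq : ∀ᶠ x in 𝓝 (0:ℝ), f₁ (g x) = V x := by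
    filter_upwards [hΦg_eq, hΦV_eq, hsq.eventually hψ_left] with x e1 e2 e3
    rw [hf₁def]
    simp only
    rw [e1, e3, ← e2]
  -- local inverse at 1 (for the left endpoint g 1 of J)
  have hdg1ne : deriv g 1 ≠ 0 := hJ1ders 1 ⟨hgg1_le1, le_rfl⟩
  obtain ⟨φL, hφL_an, hφL_left, hφL_right⟩ := analytic_local_inverse (hg_an 1 h1mem) hdg1ne
  have hφL1 : φL (g 1) = 1 := hφL_left.self_of_nhds
  set f₀ : ℝ → ℝ := fun y => V (φL y) with hf₀def
  have hf₀_an : AnalyticAt ℝ f₀ (g 1) := by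
    have h0 : AnalyticAt ℝ V (φL (g 1)) := by rw [hφL1]; exact part2 1 h1mem
    exact h0.comp hφL_an
  -- global inverse h of g on [0,1]
  have hg_cont : ContinuousOn g (Icc (0:ℝ) 1) := fun x hx =>
    (hg_an x ⟨by linarith [hx.1], hx.2⟩).continuousAt.continuousWithinAt
  have hsurj : ∀ y ∈ Icc (g 1) 1, ∃ x ∈ Icc (0:ℝ) 1, g x = y := by
    intro y hy
    have him := intermediate_value_Icc' (zero_le_one) hg_cont
    rw [hg0] at him
    obtain ⟨x, hx, hgx⟩ := him hy
    exact ⟨x, hx, hgx⟩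
  have hchoice : ∀ y : ℝ, ∃ x : ℝ, y ∈ Icc (g 1) 1 → (x ∈ Icc (0:ℝ) 1 ∧ g x = y) := by
    intro y
    by_cases hy : y ∈ Icc (g 1) 1
    · obtain ⟨x, hx, hgx⟩ := hsurj y hy
      exact ⟨x, fun _ => ⟨hx, hgx⟩⟩
    · exact ⟨0, fun hc => absurd hc hy⟩
  choose h hh using hchoice
  have hhmem : ∀ y ∈ Icc (g 1) 1, h y ∈ Icc (0:ℝ) 1 := fun y hy => (hh y hy).1
  have hgh : ∀ y ∈ Icc (g 1) 1, g (h y) = y := fun y hy => (hh y hy).2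
  have hhg : ∀ x ∈ Icc (0:ℝ) 1, h (g x) = x := by
    intro x hx
    have hgx : g x ∈ Icc (g 1) 1 := hrange x ⟨by linarith [hx.1], hx.2⟩
    exact hinj01 _ (hhmem _ hgx) _ hx (hgh _ hgx)
  have hcomp : ∀ y ∈ Icc (g 1) 1, ∀ d ∈ Icc (0:ℝ) 1, g d < y → h y < d := by
    intro y hy d hd hlt
    by_contra hge
    push_neg at hge
    have := hmono d hd (h y) (hhmem y hy) hge
    rw [hgh y hy] at this
    linarith
  have hcomp' : ∀ y ∈ Icc (g 1) 1, ∀ d ∈ Icc (0:ℝ) 1, y < g d → d < h y := by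
    intro y hy d hd hlt
    by_contra hge
    push_neg at hge
    have := hmono (h y) (hhmem y hy) d hd hge
    rw [hgh y hy] at this
    linarith
  -- cut constants
  obtain ⟨ε₁, hε₁, hball₁⟩ := Metric.eventually_nhds_iff.mp hf₁_eq
  set δ : ℝ := min (ε₁ / 2) 1 with hδdef
  have hδ0 : 0 < δ := by positivity
  have hδ1 : δ ≤ 1 := min_le_right _ _
  have hδε : δ < ε₁ := lt_of_le_of_lt (min_le_left _ _) (by linarith)
  have hc1lt : g δ < 1 := by
    rw [← hg0]
    exact hg_anti ⟨le_rfl, zero_le_one⟩ ⟨hδ0.le, hδ1⟩ hδ0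
  have hc1ge : g 1 ≤ g δ := hmono δ ⟨hδ0.le, hδ1⟩ 1 ⟨zero_le_one, le_rfl⟩ hδ1
  have hf₁_match : ∀ y ∈ Icc (g 1) 1, g δ < y → f₁ y = V (h y) := by
    intro y hy hlt
    have hhy : h y < δ := hcomp y hy δ ⟨hδ0.le, hδ1⟩ hlt
    have hhy0 : 0 ≤ h y := (hhmem y hy).1
    have := hball₁ (y := h y) (by rw [Real.dist_eq]; rw [abs_of_nonneg]; linarith; linarith)
    rw [hgh y hy] at this
    exact this
  obtain ⟨ε₀, hε₀, hball₀⟩ := Metric.eventually_nhds_iff.mp hφL_left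
  set d₀ : ℝ := max (1 - ε₀ / 2) (1 / 2) with hd₀def
  have hd₀0 : 0 ≤ d₀ := le_trans (by norm_num) (le_max_right _ _)
  have hd₀1 : d₀ < 1 := by
    rw [hd₀def]
    apply max_lt <;> [linarith; norm_num]
  have hc₀gt : g 1 < g d₀ := hg_anti ⟨hd₀0, hd₀1.le⟩ ⟨zero_le_one, le_rfl⟩ hd₀1
  have hc₀le : g d₀ ≤ 1 := by
    have := hmono 0 ⟨le_rfl, zero_le_one⟩ d₀ ⟨hd₀0, hd₀1.le⟩ hd₀0
    rwa [hg0] at this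
  have hf₀_match : ∀ y ∈ Icc (g 1) 1, y < g d₀ → f₀ y = V (h y) := by
    intro y hy hlt
    have hhy : d₀ < h y := hcomp' y hy d₀ ⟨hd₀0, hd₀1.le⟩ hlt
    have hhy1 : h y ≤ 1 := (hhmem y hy).2
    have hd : φL (g (h y)) = h y := by
      apply hball₀
      rw [Real.dist_eq, abs_of_nonpos (by linarith)]
      have : 1 - ε₀ / 2 ≤ d₀ := le_max_left _ _
      linarith
    rw [hf₀def]
    simp only
    rw [hgh y hy] at hd
    rw [hd]
  -- definition of v
  classical
  set v : ℝ → ℝ := fun z => if z < g 1 then f₀ z else if z ≤ 1 then V (h z) else f₁ z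
    with hvdef
  have hv_eval : ∀ z ∈ Icc (g 1) 1, v z = V (h z) := by
    intro z hz
    rw [hvdef]
    simp only
    rw [if_neg (not_lt.mpr hz.1), if_pos hz.2]
  -- v ∘ g = V on I
  have hv_gx : ∀ x ∈ Icc (-1:ℝ) 1, v (g x) = V x := by
    intro x hx
    have hgx : g x ∈ Icc (g 1) 1 := hrange x hx
    rw [hv_eval _ hgx]
    rcases le_or_gt 0 x with h0 | h0
    · rw [hhg x ⟨h0, hx.2⟩]
    · have hx1 : -x ∈ Icc (0:ℝ) 1 := ⟨by linarith, by linarith [hx.1]⟩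
      rw [← hg_even x, hhg (-x) hx1, hVeven]
  -- analyticity of v on J
  have hv_an : AnalyticOnNhd ℝ v (Icc (g 1) 1) := by
    intro y hy
    rcases eq_or_lt_of_le hy.1 with hyl | hyl
    · -- y = g 1
      subst hyl
      refine hf₀_an.congr ?_
      filter_upwards [Iio_mem_nhds hc₀gt] with z hz
      by_cases hzl : z < g 1
      · rw [hvdef]; simp only; rw [if_pos hzl]
      · push_neg at hzl
        have hzJ : z ∈ Icc (g 1) 1 := ⟨hzl, le_trans hz.le hc₀le⟩
        rw [hv_eval z hzJ, hf₀_match z hzJ hz]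
    rcases eq_or_lt_of_le hy.2 with hyr | hyr
    · -- y = 1
      subst hyr
      refine hf₁_an.congr ?_
      filter_upwards [Ioi_mem_nhds hc1lt] with z hz
      by_cases hzr : z ≤ 1
      · have hzJ : z ∈ Icc (g 1) 1 := ⟨le_trans hc1ge hz.le, hzr⟩
        rw [hv_eval z hzJ, hf₁_match z hzJ hz]
      · push_neg at hzr
        rw [hvdef]; simp only
        rw [if_neg (not_lt.mpr (by linarith : g 1 ≤ z)), if_neg (not_le.mpr hzr)]
    · -- interior point
      have hyJ : y ∈ Icc (g 1) 1 := hy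
      have hw01 : h y ∈ Icc (0:ℝ) 1 := hhmem y hyJ
      have hgw : g (h y) = y := hgh y hyJ
      have hw0 : 0 < h y := by
        rcases eq_or_lt_of_le hw01.1 with h0 | h0
        · exfalso
          rw [← h0, hg0] at hgw
          linarith
        · exact h0
      have hw1 : h y < 1 := by
        rcases eq_or_lt_of_le hw01.2 with h0 | h0
        · exfalso
          rw [h0] at hgw
          linarith
        · exact h0
      have hdw : deriv g (h y) ≠ 0 := hderiv_ne (h y) hw0 hw01.2
      have hwI : h y ∈ Icc (-1:ℝ) 1 := ⟨by linarith, hw01.2⟩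
      obtain ⟨φ, hφ_an, hφ_left, _⟩ := analytic_local_inverse (hg_an (h y) hwI) hdw
      rw [hgw] at hφ_an
      obtain ⟨ε₂, hε₂, hball₂⟩ := Metric.eventually_nhds_iff.mp hφ_left
      set δ₂ : ℝ := min (ε₂ / 2) (min (h y / 2) ((1 - h y) / 2)) with hδ₂def
      have hδ₂0 : 0 < δ₂ := by
        rw [hδ₂def]
        apply lt_min (by linarith)
        apply lt_min <;> linarith
      have hδ₂ε : δ₂ < ε₂ := lt_of_le_of_lt (min_le_left _ _) (by linarith)
      have hδ₂w : δ₂ ≤ h y / 2 := le_trans (min_le_right _ _) (min_le_left _ _)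
      have hδ₂w' : δ₂ ≤ (1 - h y) / 2 := le_trans (min_le_right _ _) (min_le_right _ _)
      have haL : h y - δ₂ ∈ Icc (0:ℝ) 1 := ⟨by linarith, by linarith⟩
      have haR : h y + δ₂ ∈ Icc (0:ℝ) 1 := ⟨by linarith, by linarith⟩
      have hlt1 : g (h y + δ₂) < y := by
        have h5 := hg_anti hw01 haR (by linarith : h y < h y + δ₂)
        rwa [hgw] at h5
      have hlt2 : y < g (h y - δ₂) := by
        have h5 := hg_anti haL hw01 (by linarith : h y - δ₂ < h y)
        rwa [hgw] at h5
      have hφy : φ y = h y := by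
        have h0 := hφ_left.self_of_nhds
        rwa [hgw] at h0
      have hfy_an : AnalyticAt ℝ (fun z => V (φ z)) y := by
        have h0 : AnalyticAt ℝ V (φ y) := by
          rw [hφy]
          exact part2 (h y) hwI
        exact h0.comp hφ_an
      refine hfy_an.congr ?_
      filter_upwards [Ioo_mem_nhds hlt1 hlt2] with z hz
      have hgaR : g 1 ≤ g (h y + δ₂) := hmono (h y + δ₂) haR 1 ⟨zero_le_one, le_rfl⟩ haR.2
      have hgaL : g (h y - δ₂) ≤ 1 := by
        have := hmono 0 ⟨le_rfl, zero_le_one⟩ (h y - δ₂) haL haL.1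
        rwa [hg0] at this
      have hzJ : z ∈ Icc (g 1) 1 := ⟨le_trans hgaR hz.1.le, le_trans hz.2.le hgaL⟩
      have hhz1 : h z < h y + δ₂ := hcomp z hzJ (h y + δ₂) haR hz.1
      have hhz2 : h y - δ₂ < h z := hcomp' z hzJ (h y - δ₂) haL hz.2
      have hdist : dist (h z) (h y) < ε₂ := by
        rw [Real.dist_eq, abs_lt]
        constructor <;> linarith
      have hφz : φ (g (h z)) = h z := hball₂ hdist
      rw [hgh z hzJ] at hφz
      rw [hv_eval z hzJ, hφz]
  refine ⟨v, by rw [hJ]; exact hv_an, fun x hx => hv_gx x hx, ?_⟩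
  -- the functional equation
  intro x hxJ
  have hx : x ∈ Icc (g 1) 1 := hJ ▸ hxJ
  have hw01 : h x ∈ Icc (0:ℝ) 1 := hhmem x hx
  have hgw : g (h x) = x := hgh x hx
  have hwI : h x ∈ Icc (-1:ℝ) 1 := ⟨by linarith [hw01.1], hw01.2⟩
  set w : ℝ := h x with hwdef
  set t : ℝ := -w / α with htdef
  set u : ℝ := g t with hudef
  have hut : u = g (w / α) := by
    rw [hudef, htdef, neg_div, hg_even]
  have huJ₁ : u ∈ Icc (g (g 1)) 1 := by
    rw [hut]
    exact hwα_J₁ w hw01.1 hw01.2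
  have hu01 : u ∈ Icc (0:ℝ) 1 := ⟨by linarith [huJ₁.1], huJ₁.2⟩
  have huI : u ∈ Icc (-1:ℝ) 1 := ⟨by linarith [hu01.1], hu01.2⟩
  have hCFw : g w = -α * g (g (-w / α)) := hCF w hwI
  have hgu : g u = -x / α := by
    have h0 : x = -α * g u := by
      rw [← hgw, hudef, htdef]
      exact hCFw
    field_simp
    linarith
  have hy₁x : y₁ x = u := by
    obtain ⟨hy₁J, hy₁σ⟩ := hy₁ x hxJ
    have hy₁J' : y₁ x ∈ Icc (g (g 1)) 1 := hJ₁ ▸ hy₁J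
    have h01a : y₁ x ∈ Icc (0:ℝ) 1 := ⟨by linarith [hy₁J'.1], hy₁J'.2⟩
    apply hinj01 _ h01a _ hu01
    have e1 : -α * g (y₁ x) = x := by
      rw [← hσ1 _ hy₁J]
      exact hy₁σ
    have e2 : -α * g u = x := by
      rw [hgu]
      field_simp
    exact mul_left_cancel₀ (neg_ne_zero.mpr hαne) (e1.trans e2.symm)
  have hvx : v x = V w := hv_eval x hx
  have hwα01 : w / α ∈ Icc (0:ℝ) 1 := by
    constructor
    · have := hw01.1
      positivity
    · have h0 : w / α ≤ w := div_le_self hw01.1 hα1.le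
      linarith [hw01.2]
  have hvu : v u = V t := by
    have huJ : u ∈ Icc (g 1) 1 := ⟨by linarith [huJ₁.1], huJ₁.2⟩
    rw [hv_eval u huJ, hut, hhg (w / α) hwα01]
    rw [htdef, neg_div, hVeven]
  have hvmx : v (-x / α) = V u := by
    have hmxJ : -x / α ∈ Icc (g 1) 1 := by
      rw [← hgu]
      exact hrange u huI
    rw [hv_eval _ hmxJ, ← hgu, hhg u hu01]
  have hch : deriv g w = deriv g u * deriv g t := by
    have h0 := hchain w hwI
    rw [htdef, hudef]
    exact h0
  rw [hvmx, hy₁x, hvu, hvx]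
  have hexp : α ^ (-(2 * (((k+1) : ℕ) : ℤ) - 2)) = (α ^ (2 * k))⁻¹ := by
    have he1 : (-(2 * (((k+1) : ℕ) : ℤ) - 2)) = -((2 * k : ℕ) : ℤ) := by push_cast; ring
    rw [he1, zpow_neg, zpow_natCast]
  rw [hexp]
  have hαn : α ^ n ≠ 0 := pow_ne_zero _ hαne
  have h2kne : (α:ℝ) ^ (2 * k) ≠ 0 := pow_ne_zero _ hαne
  simp only [hVdef]
  rw [hch, hgw, hgu]
  rw [show g t = u from hudef.symm]
  rw [htdef]
  rw [show (-w / α : ℝ) = -(w / α) by ring, hodd_n.neg_pow,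
    show (-x / α : ℝ) = -(x / α) by ring, hodd_n.neg_pow, div_pow, div_pow]
  rw [hn]
  have hαm : (α:ℝ) ^ (2 * k + 1) ≠ 0 := pow_ne_zero _ hαne
  field_simp
  ring
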